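/- The integral I(c) = ∫₀¹ √(p(1−p)) · ln(1 + c/((c−1)²·p·(1−p))) dp satisfies lim_{c→∞} c·I(c) = π. -/

import Mathlib

open Filter MeasureTheory intervalIntegral

/-- The integral `I(c) = ∫₀¹ √(p(1−p)) · ln(1 + c/((c−1)²·p·(1−p))) dp`, which equals
`π·c·(μ₁(c) − μ₀(c))` for the interleaving log-likelihood scores. -/
noncomputable def Iint (c : ℝ) : ℝ :=
  ∫ p in (0:ℝ)..1, Real.sqrt (p * (1 - p)) *
    Real.log (1 + c / ((c - 1) ^ 2 * p * (1 - p)))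

namespace IintAux

/-! ### Derivative of `arcsin (2p-1)` -/

lemma arcsin_deriv {x : ℝ} (h1 : 0 < x) (h2 : x < 1) :
    HasDerivAt (fun p : ℝ => Real.arcsin (2 * p - 1)) (1 / Real.sqrt (x * (1 - x))) x := by
  have ha : (2 * x - 1) ≠ -1 := by intro h; linarith [h]
  have hb : (2 * x - 1) ≠ 1 := by intro h; linarith [h]
  have harc := Real.hasDerivAt_arcsin ha hb
  have hlin : HasDerivAt (fun p : ℝ => 2 * p - 1) 2 x := by
    simpa using ((hasDerivAt_id x).const_mul 2).sub_const 1
  have h := harc.comp x hlin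
  refine h.congr_deriv ?_
  have hq : (0:ℝ) < x * (1 - x) := by nlinarith
  have he : 1 - (2 * x - 1) ^ 2 = 2 ^ 2 * (x * (1 - x)) := by ring
  have h4 : Real.sqrt (2 ^ 2 * (x * (1 - x))) = 2 * Real.sqrt (x * (1 - x)) := by
    rw [Real.sqrt_mul (by norm_num), Real.sqrt_sq (by norm_num)]
  rw [he, h4]
  have hs : Real.sqrt (x * (1 - x)) ≠ 0 := by positivity
  field_simp

lemma contOn_inv_sqrt_q {a b : ℝ} (h : ∀ x ∈ Set.uIcc a b, 0 < x * (1 - x)) :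
    ContinuousOn (fun p : ℝ => 1 / Real.sqrt (p * (1 - p))) (Set.uIcc a b) := by
  apply ContinuousOn.div continuousOn_const
  · exact ((Real.continuous_sqrt.comp (by continuity)).continuousOn)
  · intro x hx
    have := h x hx
    positivity

/-! ### The truncated integral of `1/√(p(1-p))` -/

lemma integral_trunc {δ : ℝ} (h0 : 0 < δ) (h2 : δ < 1/2) :
    ∫ p in δ..(1-δ), 1 / Real.sqrt (p * (1 - p)) = 2 * Real.arcsin (1 - 2*δ) := by
  have hab : δ ≤ 1 - δ := by linarith
  have hmem : ∀ x ∈ Set.uIcc δ (1-δ), 0 < x ∧ x < 1 := by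
    intro x hx
    rw [Set.uIcc_of_le hab] at hx
    exact ⟨by linarith [hx.1], by linarith [hx.2]⟩
  have hint : IntervalIntegrable (fun p : ℝ => 1 / Real.sqrt (p * (1 - p))) volume δ (1-δ) :=
    (contOn_inv_sqrt_q (fun x hx => by obtain ⟨a,b⟩ := hmem x hx; nlinarith)).intervalIntegrable
  rw [integral_eq_sub_of_hasDerivAt (fun x hx => arcsin_deriv (hmem x hx).1 (hmem x hx).2) hint]
  rw [show 2*(1-δ) - 1 = 1 - 2*δ by ring, show 2*δ - 1 = -(1 - 2*δ) by ring, Real.arcsin_neg]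
  ring

/-! ### Integrability and value of the full integral of `1/√(p(1-p))` -/

lemma meas_inv_sqrt_q : Measurable (fun p : ℝ => 1 / Real.sqrt (p * (1 - p))) := by
  simp only [one_div]
  exact (Real.continuous_sqrt.comp (by continuity)).measurable.inv

lemma integrable_inv_sqrt_q :
    IntervalIntegrable (fun p : ℝ => 1 / Real.sqrt (p * (1 - p))) volume 0 1 := by
  have h1 : IntervalIntegrable (fun p : ℝ => p ^ (-(1/2) : ℝ)) volume 0 1 :=
    intervalIntegrable_rpow' (by norm_num)
  have h2 : IntervalIntegrable (fun p : ℝ => (1 - p) ^ (-(1/2) : ℝ)) volume 0 1 := by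
    have := (intervalIntegrable_rpow' (a := 0) (b := 1) (r := -(1/2)) (by norm_num)).comp_sub_left 1
    simpa using this.symm
  have hg := (h1.const_mul (Real.sqrt 2)).add (h2.const_mul (Real.sqrt 2))
  refine hg.mono_fun' (meas_inv_sqrt_q.aestronglyMeasurable) ?_
  rw [Set.uIoc_of_le (by norm_num : (0:ℝ) ≤ 1)]
  refine (ae_restrict_iff' measurableSet_Ioc).mpr (ae_of_all _ ?_)
  rintro p ⟨hp0, hp1⟩
  have key : ∀ a b : ℝ, 0 ≤ a → 1/2 ≤ b →
      (Real.sqrt a)⁻¹ * (Real.sqrt b)⁻¹ ≤ Real.sqrt 2 * a ^ (-(1/2):ℝ) := by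
    intro a b ha hb
    have hra : a ^ (-(1/2):ℝ) = (Real.sqrt a)⁻¹ := by
      rw [Real.rpow_neg ha, ← Real.sqrt_eq_rpow]
    rw [hra, mul_comm (Real.sqrt 2)]
    apply mul_le_mul_of_nonneg_left _ (by positivity)
    have hsb : (Real.sqrt 2)⁻¹ ≤ Real.sqrt b := by
      rw [← Real.sqrt_inv]
      exact Real.sqrt_le_sqrt (by linarith)
    calc (Real.sqrt b)⁻¹ ≤ ((Real.sqrt 2)⁻¹)⁻¹ := by
          apply inv_anti₀ (by positivity) hsb
      _ = Real.sqrt 2 := inv_inv _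
  have hnorm : ‖1 / Real.sqrt (p * (1 - p))‖ = (Real.sqrt p)⁻¹ * (Real.sqrt (1-p))⁻¹ := by
    rw [Real.norm_eq_abs, abs_of_nonneg (by positivity), Real.sqrt_mul hp0.le, one_div, mul_inv]
  simp only []
  rw [hnorm]
  rcases le_or_gt p (1/2) with h | h
  · calc (Real.sqrt p)⁻¹ * (Real.sqrt (1-p))⁻¹ ≤ Real.sqrt 2 * p ^ (-(1/2):ℝ) :=
          key p (1-p) hp0.le (by linarith)
      _ ≤ _ := le_add_of_nonneg_right
          (mul_nonneg (Real.sqrt_nonneg 2) (Real.rpow_nonneg (by linarith) _))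
  · calc (Real.sqrt p)⁻¹ * (Real.sqrt (1-p))⁻¹ ≤ Real.sqrt 2 * (1-p) ^ (-(1/2):ℝ) := by
          rw [mul_comm ((Real.sqrt p)⁻¹)]
          exact key (1-p) p (by linarith) (by linarith)
      _ ≤ _ := le_add_of_nonneg_left (by positivity)

lemma integral_full : ∫ p in (0:ℝ)..1, 1 / Real.sqrt (p * (1 - p)) = Real.pi := by
  have hcont : Continuous (fun p : ℝ => Real.arcsin (2 * p - 1)) :=
    Real.continuous_arcsin.comp (by continuity)
  have ha : Tendsto (fun p : ℝ => Real.arcsin (2 * p - 1)) (nhdsWithin 0 (Set.Ioi 0))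
      (nhds (-(Real.pi/2))) := by
    have := (hcont.tendsto 0).mono_left (nhdsWithin_le_nhds (s := Set.Ioi 0))
    rw [show Real.arcsin (2 * 0 - 1) = -(Real.pi/2) by norm_num [Real.arcsin_neg_one]] at this
    exact this
  have hb : Tendsto (fun p : ℝ => Real.arcsin (2 * p - 1)) (nhdsWithin 1 (Set.Iio 1))
      (nhds (Real.pi/2)) := by
    have := (hcont.tendsto 1).mono_left (nhdsWithin_le_nhds (s := Set.Iio 1))
    rw [show Real.arcsin (2 * 1 - 1) = Real.pi/2 by norm_num [Real.arcsin_one]] at this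
    exact this
  rw [integral_eq_sub_of_hasDerivAt_of_tendsto one_pos
    (fun x hx => arcsin_deriv hx.1 hx.2) integrable_inv_sqrt_q ha hb]
  ring

/-! ### Pointwise bounds on the integrand -/

lemma f_nonneg {c : ℝ} (hc : 1 < c) {p : ℝ} (hp : p ∈ Set.Icc (0:ℝ) 1) :
    0 ≤ Real.sqrt (p * (1 - p)) * Real.log (1 + c / ((c - 1) ^ 2 * p * (1 - p))) := by
  obtain ⟨h0, h1⟩ := hp
  have hd : 0 ≤ (c - 1) ^ 2 * p * (1 - p) := by
    have : (0:ℝ) ≤ 1 - p := by linarith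
    positivity
  have hx : 0 ≤ c / ((c - 1) ^ 2 * p * (1 - p)) := div_nonneg (by linarith) hd
  exact mul_nonneg (Real.sqrt_nonneg _) (Real.log_nonneg (by linarith))

lemma f_le {c : ℝ} (hc : 1 < c) {p : ℝ} (hp : p ∈ Set.Icc (0:ℝ) 1) :
    Real.sqrt (p * (1 - p)) * Real.log (1 + c / ((c - 1) ^ 2 * p * (1 - p)))
      ≤ c / (c - 1) ^ 2 * (1 / Real.sqrt (p * (1 - p))) := by
  obtain ⟨h0, h1⟩ := hp
  have hcm : c - 1 ≠ 0 := by intro h; linarith [h]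
  have hq0 : 0 ≤ p * (1 - p) := by nlinarith
  rcases eq_or_lt_of_le hq0 with hq | hq
  · have hpe : (c - 1) ^ 2 * p * (1 - p) = 0 := by rw [mul_assoc, ← hq, mul_zero]
    rw [hpe, div_zero, add_zero, Real.log_one, mul_zero, ← hq, Real.sqrt_zero, div_zero, mul_zero]
  · set s := Real.sqrt (p * (1 - p)) with hsdef
    have hs0 : 0 < s := Real.sqrt_pos.mpr hq
    have hs2 : s * s = p * (1 - p) := Real.mul_self_sqrt hq0
    have hd : 0 < (c - 1) ^ 2 * p * (1 - p) := by
      rw [mul_assoc]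
      exact mul_pos (by positivity) hq
    have hx : 0 < c / ((c - 1) ^ 2 * p * (1 - p)) := div_pos (by linarith) hd
    have hlog : Real.log (1 + c / ((c - 1) ^ 2 * p * (1 - p)))
        ≤ c / ((c - 1) ^ 2 * p * (1 - p)) := by
      have := Real.log_le_sub_one_of_pos
        (show (0:ℝ) < 1 + c / ((c - 1) ^ 2 * p * (1 - p)) by linarith)
      linarith
    calc s * Real.log (1 + c / ((c - 1) ^ 2 * p * (1 - p)))
        ≤ s * (c / ((c - 1) ^ 2 * p * (1 - p))) := mul_le_mul_of_nonneg_left hlog hs0.le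
      _ = c / (c - 1) ^ 2 * (1 / s) := by
          rw [mul_assoc, ← hs2]
          field_simp

lemma f_ge {c : ℝ} (hc : 1 < c) {p : ℝ} (hq : 0 < p * (1 - p)) :
    c / (c - 1) ^ 2 * (1 / Real.sqrt (p * (1 - p)))
      - c ^ 2 / (c - 1) ^ 4 * (1 / (Real.sqrt (p * (1 - p)) * (p * (1 - p))))
      ≤ Real.sqrt (p * (1 - p)) * Real.log (1 + c / ((c - 1) ^ 2 * p * (1 - p))) := by
  have hcm : (0:ℝ) < c - 1 := by linarith
  set s := Real.sqrt (p * (1 - p)) with hsdef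
  have hs0 : 0 < s := Real.sqrt_pos.mpr hq
  have hs2 : s * s = p * (1 - p) := Real.mul_self_sqrt hq.le
  set x := c / ((c - 1) ^ 2 * p * (1 - p)) with hxdef
  have hd : 0 < (c - 1) ^ 2 * p * (1 - p) := by
    rw [mul_assoc]; exact mul_pos (by positivity) hq
  have hx : 0 < x := div_pos (by linarith) hd
  have hlog : x - x ^ 2 ≤ Real.log (1 + x) := by
    have h1 : Real.log ((1 + x)⁻¹) ≤ (1 + x)⁻¹ - 1 :=
      Real.log_le_sub_one_of_pos (by positivity)
    rw [Real.log_inv] at h1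
    have he : 1 - (1 + x)⁻¹ = x / (1 + x) := by field_simp; ring
    have h2 : x - x ^ 2 ≤ x / (1 + x) := by
      rw [le_div_iff₀ (by positivity)]
      nlinarith [pow_nonneg hx.le 3]
    linarith
  have hassoc : (c - 1) ^ 2 * p * (1 - p) = (c - 1) ^ 2 * (s * s) := by
    rw [mul_assoc, ← hs2]
  have hmain : s * (x - x ^ 2)
      = c / (c - 1) ^ 2 * (1 / s) - c ^ 2 / (c - 1) ^ 4 * (1 / (s * (p * (1 - p)))) := by
    rw [hxdef, hassoc, ← hs2]
    field_simp
  calc c / (c - 1) ^ 2 * (1 / s) - c ^ 2 / (c - 1) ^ 4 * (1 / (s * (p * (1 - p))))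
      = s * (x - x ^ 2) := hmain.symm
    _ ≤ s * Real.log (1 + x) := mul_le_mul_of_nonneg_left hlog hs0.le

/-! ### Measurability and integrability of the integrand -/

lemma f_measurable (c : ℝ) : Measurable (fun p : ℝ =>
    Real.sqrt (p * (1 - p)) * Real.log (1 + c / ((c - 1) ^ 2 * p * (1 - p)))) := by
  apply Measurable.mul
  · exact Real.continuous_sqrt.measurable.comp
      (continuous_id.mul (continuous_const.sub continuous_id)).measurable
  · apply Real.measurable_log.comp
    apply Measurable.add measurable_const
    exact (measurable_const.div
      ((continuous_const.mul continuous_id |>.mul (continuous_const.sub continuous_id)).measurable))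

lemma f_intervalIntegrable {c : ℝ} (hc : 1 < c) :
    IntervalIntegrable (fun p : ℝ =>
      Real.sqrt (p * (1 - p)) * Real.log (1 + c / ((c - 1) ^ 2 * p * (1 - p)))) volume 0 1 := by
  refine (integrable_inv_sqrt_q.const_mul (c / (c - 1) ^ 2)).mono_fun'
    (f_measurable c).aestronglyMeasurable ?_
  rw [Set.uIoc_of_le (by norm_num : (0:ℝ) ≤ 1)]
  refine (ae_restrict_iff' measurableSet_Ioc).mpr (ae_of_all _ ?_)
  rintro p hp
  have hp' : p ∈ Set.Icc (0:ℝ) 1 := Set.Ioc_subset_Icc_self hp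
  simp only [Real.norm_eq_abs]
  rw [abs_of_nonneg (f_nonneg hc hp')]
  exact f_le hc hp'

end IintAux

namespace IintAux

/-! ### Upper and lower bounding functions -/

noncomputable def Lo (c : ℝ) : ℝ :=
  (c / (c - 1)) ^ 2 * (2 * Real.arcsin (1 - 2 * (Real.sqrt c)⁻¹))
    - (c / (c - 1)) ^ 4 * (2 * (Real.sqrt c)⁻¹) * Real.pi

noncomputable def Up (c : ℝ) : ℝ := (c / (c - 1)) ^ 2 * Real.pi

lemma upper_bound {c : ℝ} (hc : 1 < c) : c * Iint c ≤ Up c := by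
  have hc0 : (0:ℝ) < c := by linarith
  have hcm : c - 1 ≠ 0 := by intro h; linarith [h]
  have h1 : Iint c ≤ c / (c - 1) ^ 2 * Real.pi := by
    rw [Iint]
    calc (∫ p in (0:ℝ)..1, Real.sqrt (p * (1 - p)) *
            Real.log (1 + c / ((c - 1) ^ 2 * p * (1 - p))))
        ≤ ∫ p in (0:ℝ)..1, c / (c - 1) ^ 2 * (1 / Real.sqrt (p * (1 - p))) := by
          apply integral_mono_on (by norm_num) (f_intervalIntegrable hc)
            (integrable_inv_sqrt_q.const_mul _)
          intro x hx
          exact f_le hc hx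
      _ = c / (c - 1) ^ 2 * Real.pi := by rw [intervalIntegral.integral_const_mul, integral_full]
  calc c * Iint c ≤ c * (c / (c - 1) ^ 2 * Real.pi) :=
        mul_le_mul_of_nonneg_left h1 hc0.le
    _ = Up c := by simp only [Up, div_pow]; ring

set_option maxHeartbeats 1000000 in
lemma lower_bound {c : ℝ} (hc : 4 < c) : Lo c ≤ c * Iint c := by
  have hc0 : (0:ℝ) < c := by linarith
  have hc1 : (1:ℝ) < c := by linarith
  have hcm : (0:ℝ) < c - 1 := by linarith
  have hsc0 : 0 < Real.sqrt c := Real.sqrt_pos.mpr hc0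
  have hsc2 : (2:ℝ) < Real.sqrt c := by
    rw [show (2:ℝ) = Real.sqrt 4 by
      rw [show (4:ℝ) = 2 ^ 2 by norm_num, Real.sqrt_sq (by norm_num)]]
    exact Real.sqrt_lt_sqrt (by norm_num) hc
  set δ := (Real.sqrt c)⁻¹ with hδdef
  have hδ0 : 0 < δ := by positivity
  have hδs : δ * Real.sqrt c = 1 := inv_mul_cancel₀ hsc0.ne'
  have hδ2 : δ < 1/2 := by nlinarith
  have hab : δ ≤ 1 - δ := by linarith
  -- pointwise facts on [δ, 1-δ]
  have hqlb : ∀ p ∈ Set.Icc δ (1-δ), δ/2 ≤ p * (1 - p) := by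
    intro p hp
    obtain ⟨h1, h2⟩ := hp
    nlinarith [mul_nonneg (sub_nonneg.2 h1) (sub_nonneg.2 h2)]
  have hqpos : ∀ p ∈ Set.Icc δ (1-δ), 0 < p * (1 - p) := fun p hp => by
    have := hqlb p hp; linarith
  have huIcc : Set.uIcc δ (1-δ) = Set.Icc δ (1-δ) := Set.uIcc_of_le hab
  -- continuity-based integrability on [δ, 1-δ]
  have hcont1 : ContinuousOn (fun p : ℝ => 1 / Real.sqrt (p * (1 - p))) (Set.uIcc δ (1-δ)) :=
    contOn_inv_sqrt_q (fun x hx => hqpos x (huIcc ▸ hx))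
  have hint1 : IntervalIntegrable (fun p : ℝ => 1 / Real.sqrt (p * (1 - p)))
      volume δ (1-δ) := hcont1.intervalIntegrable
  have hcont2 : ContinuousOn
      (fun p : ℝ => 1 / (Real.sqrt (p * (1 - p)) * (p * (1 - p)))) (Set.uIcc δ (1-δ)) := by
    apply ContinuousOn.div continuousOn_const
    · exact ((Real.continuous_sqrt.comp (by continuity)).continuousOn).mul
        (Continuous.continuousOn (by continuity))
    · intro x hx
      have := hqpos x (huIcc ▸ hx)
      positivity
  have hint2 : IntervalIntegrable
      (fun p : ℝ => 1 / (Real.sqrt (p * (1 - p)) * (p * (1 - p)))) volume δ (1-δ) :=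
    hcont2.intervalIntegrable
  have hinth : IntervalIntegrable (fun p : ℝ =>
      c / (c - 1) ^ 2 * (1 / Real.sqrt (p * (1 - p)))
        - c ^ 2 / (c - 1) ^ 4 * (1 / (Real.sqrt (p * (1 - p)) * (p * (1 - p)))))
      volume δ (1-δ) := (hint1.const_mul _).sub (hint2.const_mul _)
  have hintf : IntervalIntegrable (fun p : ℝ =>
      Real.sqrt (p * (1 - p)) * Real.log (1 + c / ((c - 1) ^ 2 * p * (1 - p))))
      volume δ (1-δ) := by
    apply (f_intervalIntegrable hc1).mono_set
    rw [huIcc, Set.uIcc_of_le (by norm_num : (0:ℝ) ≤ 1)]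
    exact Set.Icc_subset_Icc (by linarith) (by linarith)
  -- step 1 : ∫ h ≤ ∫ f on [δ, 1-δ]
  have hstep1 : (∫ p in δ..(1-δ),
        (c / (c - 1) ^ 2 * (1 / Real.sqrt (p * (1 - p)))
          - c ^ 2 / (c - 1) ^ 4 * (1 / (Real.sqrt (p * (1 - p)) * (p * (1 - p))))))
      ≤ ∫ p in δ..(1-δ), Real.sqrt (p * (1 - p)) *
          Real.log (1 + c / ((c - 1) ^ 2 * p * (1 - p))) := by
    apply integral_mono_on hab hinth hintf
    intro x hx
    exact f_ge hc1 (hqpos x hx)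
  -- step 2 : ∫_δ^{1-δ} f ≤ Iint c
  have hstep2 : (∫ p in δ..(1-δ), Real.sqrt (p * (1 - p)) *
        Real.log (1 + c / ((c - 1) ^ 2 * p * (1 - p)))) ≤ Iint c := by
    rw [Iint]
    apply integral_mono_interval (by linarith) hab (by linarith)
      ?_ (f_intervalIntegrable hc1)
    refine (ae_restrict_iff' measurableSet_Ioc).mpr (ae_of_all _ ?_)
    intro p hp
    exact f_nonneg hc1 (Set.Ioc_subset_Icc_self hp)
  -- step 3 : evaluate/estimate ∫ h
  have hI1 : (∫ p in δ..(1-δ), 1 / Real.sqrt (p * (1 - p))) = 2 * Real.arcsin (1 - 2*δ) :=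
    integral_trunc hδ0 hδ2
  have hI2le : (∫ p in δ..(1-δ), 1 / (Real.sqrt (p * (1 - p)) * (p * (1 - p))))
      ≤ 2 * Real.sqrt c * Real.pi := by
    have hmono : (∫ p in δ..(1-δ), 1 / (Real.sqrt (p * (1 - p)) * (p * (1 - p))))
        ≤ ∫ p in δ..(1-δ), 2 * Real.sqrt c * (1 / Real.sqrt (p * (1 - p))) := by
      apply integral_mono_on hab hint2 (hint1.const_mul _)
      intro x hx
      have hq := hqpos x hx
      have hqb := hqlb x hx
      have hs0 : 0 < Real.sqrt (x * (1 - x)) := Real.sqrt_pos.mpr hq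
      have h2 : (x * (1 - x))⁻¹ ≤ 2 * Real.sqrt c := by
        have h1 : 1 ≤ 2 * Real.sqrt c * (x * (1 - x)) := by nlinarith
        calc (x * (1 - x))⁻¹ = (x * (1 - x))⁻¹ * 1 := (mul_one _).symm
          _ ≤ (x * (1 - x))⁻¹ * (2 * Real.sqrt c * (x * (1 - x))) :=
              mul_le_mul_of_nonneg_left h1 (by positivity)
          _ = 2 * Real.sqrt c := by field_simp; exact div_self hq.ne'
      rw [one_div, mul_inv, mul_one_div, div_eq_mul_inv]
      calc (Real.sqrt (x * (1-x)))⁻¹ * (x * (1-x))⁻¹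
          ≤ (Real.sqrt (x * (1-x)))⁻¹ * (2 * Real.sqrt c) :=
            mul_le_mul_of_nonneg_left h2 (by positivity)
        _ = 2 * Real.sqrt c * (Real.sqrt (x * (1-x)))⁻¹ := mul_comm _ _
    calc (∫ p in δ..(1-δ), 1 / (Real.sqrt (p * (1 - p)) * (p * (1 - p))))
        ≤ ∫ p in δ..(1-δ), 2 * Real.sqrt c * (1 / Real.sqrt (p * (1 - p))) := hmono
      _ = 2 * Real.sqrt c * (2 * Real.arcsin (1 - 2*δ)) := by
          rw [intervalIntegral.integral_const_mul, hI1]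
      _ ≤ 2 * Real.sqrt c * Real.pi := by
          have := Real.arcsin_le_pi_div_two (1 - 2*δ)
          nlinarith
  have hsplit : (∫ p in δ..(1-δ),
        (c / (c - 1) ^ 2 * (1 / Real.sqrt (p * (1 - p)))
          - c ^ 2 / (c - 1) ^ 4 * (1 / (Real.sqrt (p * (1 - p)) * (p * (1 - p))))))
      = c / (c - 1) ^ 2 * (2 * Real.arcsin (1 - 2*δ))
        - c ^ 2 / (c - 1) ^ 4 *
          (∫ p in δ..(1-δ), 1 / (Real.sqrt (p * (1 - p)) * (p * (1 - p)))) := by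
    rw [integral_sub (hint1.const_mul _) (hint2.const_mul _),
      intervalIntegral.integral_const_mul, intervalIntegral.integral_const_mul, hI1]
  -- combine
  have hLoval : Lo c = c * (c / (c - 1) ^ 2 * (2 * Real.arcsin (1 - 2*δ))
      - c ^ 2 / (c - 1) ^ 4 * (2 * Real.sqrt c * Real.pi)) := by
    have hss : Real.sqrt c * Real.sqrt c = c := Real.mul_self_sqrt hc0.le
    simp only [Lo]
    rw [hδdef]
    generalize hgen : Real.sqrt c = t at hss hsc2 ⊢
    have ht0 : (0:ℝ) < t := by linarith
    have ht : t ≠ 0 := ht0.ne'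
    rw [← hss]
    have htm : t * t - 1 ≠ 0 := by nlinarith
    field_simp
  have hhge : c / (c - 1) ^ 2 * (2 * Real.arcsin (1 - 2*δ))
      - c ^ 2 / (c - 1) ^ 4 * (2 * Real.sqrt c * Real.pi)
      ≤ ∫ p in δ..(1-δ),
        (c / (c - 1) ^ 2 * (1 / Real.sqrt (p * (1 - p)))
          - c ^ 2 / (c - 1) ^ 4 * (1 / (Real.sqrt (p * (1 - p)) * (p * (1 - p))))) := by
    rw [hsplit]
    have hpos : 0 ≤ c ^ 2 / (c - 1) ^ 4 := by positivity
    have := mul_le_mul_of_nonneg_left hI2le hpos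
    linarith
  rw [hLoval]
  apply mul_le_mul_of_nonneg_left _ hc0.le
  calc c / (c - 1) ^ 2 * (2 * Real.arcsin (1 - 2*δ))
        - c ^ 2 / (c - 1) ^ 4 * (2 * Real.sqrt c * Real.pi)
      ≤ ∫ p in δ..(1-δ),
          (c / (c - 1) ^ 2 * (1 / Real.sqrt (p * (1 - p)))
            - c ^ 2 / (c - 1) ^ 4 * (1 / (Real.sqrt (p * (1 - p)) * (p * (1 - p))))) := hhge
    _ ≤ _ := le_trans hstep1 hstep2

end IintAux

namespace IintAux

/-! ### Limits -/

lemma tendsto_ratio : Tendsto (fun c : ℝ => c / (c - 1)) atTop (nhds 1) := by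
  have h : Tendsto (fun c : ℝ => 1 + (c - 1)⁻¹) atTop (nhds (1 + 0)) :=
    tendsto_const_nhds.add ((tendsto_atTop_add_const_right _ (-1) tendsto_id).inv_tendsto_atTop)
  rw [add_zero] at h
  apply h.congr'
  filter_upwards [eventually_gt_atTop (1:ℝ)] with c hc
  have : c - 1 ≠ 0 := by intro h; linarith [h]
  field_simp
  ring

lemma tendsto_sqrt_atTop : Tendsto Real.sqrt atTop atTop := by
  apply (tendsto_rpow_atTop (by norm_num : (0:ℝ) < 1/2)).congr
  exact fun x => (Real.sqrt_eq_rpow x).symm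

lemma tendsto_invsqrt : Tendsto (fun c : ℝ => (Real.sqrt c)⁻¹) atTop (nhds 0) :=
  tendsto_sqrt_atTop.inv_tendsto_atTop

lemma tendsto_Up : Tendsto Up atTop (nhds Real.pi) := by
  have h := (tendsto_ratio.pow 2).mul_const Real.pi
  rw [one_pow, one_mul] at h
  exact h

lemma tendsto_Lo : Tendsto Lo atTop (nhds Real.pi) := by
  have harg : Tendsto (fun c : ℝ => 1 - 2 * (Real.sqrt c)⁻¹) atTop (nhds 1) := by
    have h : Tendsto (fun c : ℝ => 1 - 2 * (Real.sqrt c)⁻¹) atTop (nhds (1 - 2 * 0)) :=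
      tendsto_const_nhds.sub (tendsto_invsqrt.const_mul 2)
    rw [show (1:ℝ) - 2 * 0 = 1 by norm_num] at h
    exact h
  have harc : Tendsto (fun c : ℝ => Real.arcsin (1 - 2 * (Real.sqrt c)⁻¹)) atTop
      (nhds (Real.pi / 2)) := by
    have := (Real.continuous_arcsin.tendsto 1).comp harg
    rwa [Real.arcsin_one] at this
  have h1 : Tendsto (fun c : ℝ => (c / (c - 1)) ^ 2 *
      (2 * Real.arcsin (1 - 2 * (Real.sqrt c)⁻¹))) atTop
      (nhds (1 ^ 2 * (2 * (Real.pi / 2)))) :=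
    (tendsto_ratio.pow 2).mul (harc.const_mul 2)
  have h2 : Tendsto (fun c : ℝ => (c / (c - 1)) ^ 4 * (2 * (Real.sqrt c)⁻¹) * Real.pi) atTop
      (nhds (1 ^ 4 * (2 * 0) * Real.pi)) :=
    ((tendsto_ratio.pow 4).mul (tendsto_invsqrt.const_mul 2)).mul_const Real.pi
  have h := h1.sub h2
  have he : (1:ℝ) ^ 2 * (2 * (Real.pi / 2)) - 1 ^ 4 * (2 * 0) * Real.pi = Real.pi := by ring
  rw [he] at h
  exact h

end IintAux

open IintAux in
/-- The integral `I(c)` satisfies `I(c) ∼ π/c`, i.e. `c·I(c) → π` as `c → ∞`. -/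
theorem Iint_asymptotics :
    Tendsto (fun c : ℝ => c * Iint c) atTop (nhds Real.pi) := by
  apply tendsto_of_tendsto_of_tendsto_of_le_of_le' tendsto_Lo tendsto_Up
  · filter_upwards [eventually_gt_atTop (4:ℝ)] with c hc
    exact lower_bound hc
  · filter_upwards [eventually_gt_atTop (4:ℝ)] with c hc
    exact upper_bound (by linarith)
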